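/- For any partitions β and α, the composition K_β ∘ U_α equals the sum over all partitions λ of U_{s_{β/λ} ∗ s_α} ∘ K_λ, where ∗ denotes the Kronecker (internal) product of symmetric functions. -/

import Mathlib

open scoped TensorProduct Classical

noncomputable section

/-- The single-row Young diagram with `k` boxes, whose Schur function is `h_k`
and whose power sum is `p_k`. -/
def rowDiagram (k : ℕ) : YoungDiagram :=
  YoungDiagram.ofRowLens [k] (by intro i j _; simp)

/-- The quantity `z_λ = ∏ i^{m_i} m_i!` attached to a partition (Young diagram). -/
def zee (μ : YoungDiagram) : ℚ :=
  ((μ.rowLens.prod * (μ.rowLens.dedup.map fun i => (μ.rowLens.count i).factorial).prod : ℕ) : ℚ)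

lemma zee_ne_zero (μ : YoungDiagram) : zee μ ≠ 0 := by
  unfold zee
  rw [Nat.cast_ne_zero]
  apply Nat.mul_ne_zero
  · exact (List.prod_pos (fun x hx => μ.pos_of_mem_rowLens x hx)).ne'
  · refine (List.prod_pos ?_).ne'
    intro x hx
    simp only [List.mem_map] at hx
    obtain ⟨i, -, rfl⟩ := hx
    exact Nat.factorial_pos _

def ydUnion (μ ν : YoungDiagram) : YoungDiagram :=
  YoungDiagram.ofRowLens ((↑μ.rowLens + ↑ν.rowLens : Multiset ℕ).sort (· ≥ ·))
    (Multiset.pairwise_sort _ _).sortedGE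

lemma ydUnion_rowLens (μ ν : YoungDiagram) :
    (↑(ydUnion μ ν).rowLens : Multiset ℕ) = ↑μ.rowLens + ↑ν.rowLens := by
  have hpos : ∀ x ∈ (↑μ.rowLens + ↑ν.rowLens : Multiset ℕ).sort (· ≥ ·), 0 < x := by
    intro x hx
    rw [Multiset.mem_sort, Multiset.mem_add] at hx
    rcases hx with h | h
    · exact μ.pos_of_mem_rowLens x (by exact_mod_cast h)
    · exact ν.pos_of_mem_rowLens x (by exact_mod_cast h)
  rw [ydUnion, YoungDiagram.rowLens_ofRowLens_eq_self hpos, Multiset.sort_eq]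

lemma rowLens_injective : Function.Injective YoungDiagram.rowLens := by
  intro μ ν h
  rw [← YoungDiagram.ofRowLens_to_rowLens_eq_self (μ := μ),
    ← YoungDiagram.ofRowLens_to_rowLens_eq_self (μ := ν)]
  congr 1

lemma rowLens_coe_injective {μ ν : YoungDiagram}
    (h : (↑μ.rowLens : Multiset ℕ) = ↑ν.rowLens) : μ = ν := by
  apply rowLens_injective
  exact List.Perm.eq_of_sortedGE μ.rowLens_sorted ν.rowLens_sorted (Multiset.coe_eq_coe.mp h)

lemma ydUnion_cancel {μ ρ σ : YoungDiagram} (h : ydUnion μ ρ = ydUnion μ σ) : ρ = σ := by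
  have h2 := congrArg (fun d : YoungDiagram => (↑d.rowLens : Multiset ℕ)) h
  simp only [ydUnion_rowLens] at h2
  exact rowLens_coe_injective (add_left_cancel h2)

/-- The ring of symmetric functions over `ℚ`, presented with its Schur basis `s`,
its power-sum basis `p`, the Hall inner product (for which the Schur functions are
orthonormal and `⟨p_λ, p_μ⟩ = δ_{λμ} z_λ`), the skewing operators `D f` (adjoint of
multiplication by `f`), and the Kronecker product `kron`
(determined by `p_λ ∗ p_μ = δ_{λμ} z_λ p_λ`). -/
structure SymmFn (Λ : Type*) [CommRing Λ] [Algebra ℚ Λ] where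
  /-- the Schur basis -/
  s : Module.Basis YoungDiagram ℚ Λ
  /-- the power-sum basis -/
  p : Module.Basis YoungDiagram ℚ Λ
  /-- the Hall inner product -/
  inner : Λ →ₗ[ℚ] Λ →ₗ[ℚ] ℚ
  inner_symm : ∀ f g, inner f g = inner g f
  inner_schur : ∀ μ ν, inner (s μ) (s ν) = if μ = ν then 1 else 0
  inner_power : ∀ μ ν, inner (p μ) (p ν) = if μ = ν then zee μ else 0
  power_mul : ∀ μ : YoungDiagram, p μ = (μ.rowLens.map fun k => p (rowDiagram k)).prod
  /-- the skewing operator `D f`, adjoint of multiplication by `f` -/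
  D : Λ → Λ →ₗ[ℚ] Λ
  D_adjoint : ∀ f g h, inner (D f g) h = inner g (f * h)
  /-- the Kronecker (internal) product -/
  kron : Λ →ₗ[ℚ] Λ →ₗ[ℚ] Λ
  kron_power : ∀ μ ν, kron (p μ) (p ν) = if μ = ν then zee μ • p μ else 0

namespace SymmFn

variable {Λ : Type*} [CommRing Λ] [Algebra ℚ Λ] (S : SymmFn Λ)

/-- The operator `U f` of multiplication by `f`. -/
def U (_S : SymmFn Λ) (f : Λ) : Λ →ₗ[ℚ] Λ := LinearMap.mulLeft ℚ f

/-- The skew Schur function `s_{α/θ} = D_{s_θ}(s_α)`. -/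
def skew (α θ : YoungDiagram) : Λ := S.D (S.s θ) (S.s α)


lemma repr_expand (b : Module.Basis YoungDiagram ℚ Λ) (x : Λ) :
    x = ∑ i ∈ (b.repr x).support, b.repr x i • b i := by
  conv_lhs => rw [← b.linearCombination_repr x]
  rw [Finsupp.linearCombination_apply, Finsupp.sum]

lemma p_ydUnion (μ ν : YoungDiagram) : S.p (ydUnion μ ν) = S.p μ * S.p ν := by
  have key : ∀ l : List ℕ, (l.map fun k => S.p (rowDiagram k)).prod
      = ((l : Multiset ℕ).map fun k => S.p (rowDiagram k)).prod := by
    intro l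
    rw [Multiset.map_coe, Multiset.prod_coe]
  rw [S.power_mul (ydUnion μ ν), S.power_mul μ, S.power_mul ν, key, key, key,
    ydUnion_rowLens, Multiset.map_add, Multiset.prod_add]

lemma inner_p_repr (x : Λ) (ν : YoungDiagram) :
    S.inner x (S.p ν) = S.p.repr x ν * zee ν := by
  conv_lhs => rw [repr_expand S.p x]
  rw [map_sum, LinearMap.sum_apply]
  rw [Finset.sum_eq_single ν]
  · rw [map_smul, LinearMap.smul_apply, S.inner_power]
    simp
  · intro i _ hne
    rw [map_smul, LinearMap.smul_apply, S.inner_power]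
    simp [hne]
  · intro h
    rw [Finsupp.notMem_support_iff.mp h]
    simp

lemma inner_s_repr (x : Λ) (l : YoungDiagram) :
    S.inner x (S.s l) = S.s.repr x l := by
  conv_lhs => rw [repr_expand S.s x]
  rw [map_sum, LinearMap.sum_apply]
  rw [Finset.sum_eq_single l]
  · rw [map_smul, LinearMap.smul_apply, S.inner_schur]
    simp
  · intro i _ hne
    rw [map_smul, LinearMap.smul_apply, S.inner_schur]
    simp [hne]
  · intro h
    rw [Finsupp.notMem_support_iff.mp h]
    simp

lemma inner_ext {x y : Λ} (h : ∀ ν, S.inner x (S.p ν) = S.inner y (S.p ν)) : x = y := by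
  rw [Module.Basis.ext_elem_iff S.p]
  intro ν
  have := h ν
  rw [S.inner_p_repr, S.inner_p_repr] at this
  exact mul_right_cancel₀ (zee_ne_zero ν) this

lemma kron_p (f : Λ) (μ : YoungDiagram) :
    S.kron f (S.p μ) = S.inner f (S.p μ) • S.p μ := by
  have : S.kron.flip (S.p μ) = (S.inner.flip (S.p μ)).smulRight (S.p μ) := by
    refine S.p.ext fun ν => ?_
    simp only [LinearMap.flip_apply, LinearMap.smulRight_apply, S.kron_power, S.inner_power]
    rcases eq_or_ne ν μ with h | h
    · subst h; simp
    · simp [h]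
  exact DFunLike.congr_fun this f

lemma inner_kron_p (f g : Λ) (ν : YoungDiagram) :
    S.inner (S.kron f g) (S.p ν) = S.inner f (S.p ν) * S.inner g (S.p ν) := by
  have : S.kron.compr₂ (S.inner.flip (S.p ν))
      = (LinearMap.mul ℚ ℚ).compl₁₂ (S.inner.flip (S.p ν)) (S.inner.flip (S.p ν)) := by
    refine S.p.ext fun μ => S.p.ext fun ρ => ?_
    simp only [LinearMap.compr₂_apply, LinearMap.compl₁₂_apply, LinearMap.flip_apply,
      LinearMap.mul_apply', S.kron_power, S.inner_power]
    rcases eq_or_ne μ ρ with h | h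
    · subst h
      rcases eq_or_ne μ ν with h2 | h2
      · subst h2; simp [S.inner_power]
      · simp [S.inner_power, h2]
    · rcases eq_or_ne μ ν with h2 | h2
      · subst h2; simp [h, Ne.symm h]
      · simp [h, h2]
  exact DFunLike.congr_fun (DFunLike.congr_fun this f) g

lemma D_add (f g h : Λ) : S.D (f + g) h = S.D f h + S.D g h := by
  apply S.inner_ext
  intro ν
  rw [S.D_adjoint, map_add, LinearMap.add_apply, S.D_adjoint, S.D_adjoint, add_mul, map_add]

lemma D_smul (c : ℚ) (f h : Λ) : S.D (c • f) h = c • S.D f h := by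
  apply S.inner_ext
  intro ν
  rw [S.D_adjoint, map_smul, LinearMap.smul_apply, S.D_adjoint, smul_mul_assoc, map_smul]

lemma D_zero (h : Λ) : S.D 0 h = 0 := by
  have := S.D_smul 0 0 h
  simpa using this

lemma D_fsum {ι : Type*} (t : Finset ι) (c : ι → ℚ) (f : ι → Λ) (h : Λ) :
    S.D (∑ i ∈ t, c i • f i) h = ∑ i ∈ t, c i • S.D (f i) h := by
  classical
  induction t using Finset.induction with
  | empty => simp [D_zero]
  | insert x t hx ih =>
    rw [Finset.sum_insert hx, Finset.sum_insert hx, D_add, D_smul, ih]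

end SymmFn
namespace SymmFn
variable {Λ : Type*} [CommRing Λ] [Algebra ℚ Λ] (S : SymmFn Λ)

lemma inner_mul_p (y : Λ) (μ ν : YoungDiagram) :
    S.inner (y * S.p μ) (S.p ν) = S.inner y (S.D (S.p μ) (S.p ν)) := by
  rw [S.inner_symm (y * S.p μ) (S.p ν), mul_comm y (S.p μ), ← S.D_adjoint, S.inner_symm]

lemma kron_mul_p (f x : Λ) (μ : YoungDiagram) :
    S.kron f (x * S.p μ) = S.kron (S.D (S.p μ) f) x * S.p μ := by
  apply S.inner_ext
  intro ν
  rw [S.inner_kron_p, S.inner_mul_p x μ ν, S.inner_mul_p]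
  by_cases hex : ∃ σ, ydUnion μ σ = ν
  · obtain ⟨σ, hσ⟩ := hex
    have hD : S.D (S.p μ) (S.p ν) = (zee ν / zee σ) • S.p σ := by
      apply S.inner_ext
      intro ρ
      rw [S.D_adjoint, ← S.p_ydUnion, S.inner_power, map_smul, LinearMap.smul_apply,
        S.inner_power]
      rcases eq_or_ne ρ σ with h | h
      · subst h
        rw [if_pos hσ.symm, if_pos rfl, smul_eq_mul, div_mul_cancel₀ _ (zee_ne_zero _)]
      · have hne : ν ≠ ydUnion μ ρ := by
          intro hcon
          exact h.symm (ydUnion_cancel (hσ.trans hcon))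
        rw [if_neg hne, if_neg (Ne.symm h), smul_zero]
    rw [hD, map_smul, map_smul, smul_eq_mul, smul_eq_mul, S.inner_kron_p]
    have hf : S.inner (S.D (S.p μ) f) (S.p σ) = S.inner f (S.p ν) := by
      rw [S.D_adjoint, ← S.p_ydUnion, hσ]
    rw [hf]
    ring
  · have hD : S.D (S.p μ) (S.p ν) = 0 := by
      apply S.inner_ext
      intro ρ
      rw [S.D_adjoint, ← S.p_ydUnion, S.inner_power,
        if_neg (fun hcon => hex ⟨ρ, hcon.symm⟩), map_zero, LinearMap.zero_apply]
    simp [hD]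



/-- Commutation relation `K_β ∘ U_α = ∑_λ U_{s_{β/λ} ∗ s_α} ∘ K_λ`. -/
theorem kron_comp_mul (α β : YoungDiagram) :
    (S.kron (S.s β)) ∘ₗ (S.U (S.s α)) =
      ∑ᶠ l : YoungDiagram, (S.U (S.kron (S.skew β l) (S.s α))) ∘ₗ (S.kron (S.s l)) := by
  classical
  set A : Finset YoungDiagram := (S.p.repr (S.s α)).support with hA
  set T : Finset YoungDiagram :=
    A.biUnion (fun ρ => (S.s.repr (S.D (S.p ρ) (S.s β))).support) with hT
  have hskew : ∀ l ρ, S.inner (S.skew β l) (S.p ρ) = S.s.repr (S.D (S.p ρ) (S.s β)) l := by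
    intro l ρ
    rw [skew, S.D_adjoint, mul_comm, ← S.D_adjoint, S.inner_s_repr]
  have hX : ∀ l, S.kron (S.skew β l) (S.s α)
      = ∑ ρ ∈ A, (S.p.repr (S.s α) ρ * S.s.repr (S.D (S.p ρ) (S.s β)) l) • S.p ρ := by
    intro l
    conv_lhs => rw [repr_expand S.p (S.s α)]
    rw [map_sum]
    refine Finset.sum_congr rfl fun ρ _ => ?_
    rw [map_smul, S.kron_p, hskew, smul_smul]
  have hX0 : ∀ l, l ∉ T → S.kron (S.skew β l) (S.s α) = 0 := by
    intro l hl
    rw [hX]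
    refine Finset.sum_eq_zero fun ρ hρ => ?_
    have h0 : S.s.repr (S.D (S.p ρ) (S.s β)) l = 0 := by
      by_contra hne
      exact hl (Finset.mem_biUnion.mpr ⟨ρ, hρ, Finsupp.mem_support_iff.mpr hne⟩)
    rw [h0, mul_zero, zero_smul]
  have hsupp : (Function.support fun l =>
      (S.U (S.kron (S.skew β l) (S.s α))) ∘ₗ (S.kron (S.s l))) ⊆ ↑T := by
    intro l hl
    by_contra hlT
    apply hl
    show S.U ((S.kron (S.skew β l)) (S.s α)) ∘ₗ S.kron (S.s l) = 0
    rw [hX0 l (fun h => hlT (Finset.mem_coe.mpr h))]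
    ext g
    simp [U]
  rw [finsum_eq_sum_of_support_subset _ hsupp]
  refine S.p.ext fun μ => ?_
  set c : YoungDiagram → ℚ := fun l => S.s.repr (S.p μ) l with hc
  set B : Finset YoungDiagram := (S.s.repr (S.p μ)).support with hB
  have hterm : ∀ l, ((S.U (S.kron (S.skew β l) (S.s α))) ∘ₗ (S.kron (S.s l))) (S.p μ)
      = c l • (S.kron (S.skew β l) (S.s α) * S.p μ) := by
    intro l
    rw [LinearMap.comp_apply, S.kron_p]
    have : S.inner (S.s l) (S.p μ) = c l := by rw [S.inner_symm, S.inner_s_repr]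
    rw [this]
    show S.kron (S.skew β l) (S.s α) * (c l • S.p μ) = _
    rw [mul_smul_comm]
  rw [LinearMap.sum_apply]
  simp only [hterm]
  have e1 : ∑ l ∈ T, c l • (S.kron (S.skew β l) (S.s α) * S.p μ)
      = ∑ l ∈ T ∪ B, c l • (S.kron (S.skew β l) (S.s α) * S.p μ) :=
    Finset.sum_subset Finset.subset_union_left
      (fun x _ hx => by rw [hX0 x hx, zero_mul, smul_zero])
  have e2 : ∑ l ∈ B, c l • (S.kron (S.skew β l) (S.s α) * S.p μ)
      = ∑ l ∈ T ∪ B, c l • (S.kron (S.skew β l) (S.s α) * S.p μ) :=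
    Finset.sum_subset Finset.subset_union_right
      (fun x _ hx => by
        rw [show c x = 0 from Finsupp.notMem_support_iff.mp hx, zero_smul])
  rw [e1, ← e2]
  have key : S.D (S.p μ) (S.s β) = ∑ l ∈ B, c l • S.skew β l := by
    conv_lhs => rw [repr_expand S.s (S.p μ)]
    rw [D_fsum]
    rfl
  rw [LinearMap.comp_apply]
  show S.kron (S.s β) (S.s α * S.p μ) = _
  rw [S.kron_mul_p, key, map_sum, LinearMap.sum_apply, Finset.sum_mul]
  refine Finset.sum_congr rfl fun l _ => ?_
  rw [map_smul, LinearMap.smul_apply, smul_mul_assoc]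

end SymmFn
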